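/- Let σ be a positive definite n×n density matrix and let X be Hermitian. With respect to the decomposition of X into positive and negative parts determined by the self-dual cone of positive semidefinite matrices in the KMS inner product ⟨A,B⟩ = Tr(A σ^{1/2} B σ^{1/2}), the positive part of X equals σ^{-1/4} (σ^{1/4} X σ^{1/4})₍₊₎ σ^{-1/4}, where Y₍₊₎ denotes the spectral positive part of a Hermitian matrix Y. Equivalently, A = σ^{-1/4}(σ^{1/4}Xσ^{1/4})₍₊₎σ^{-1/4} minimizes ‖X − A‖ over all positive semidefinite A, in the KMS norm. -/

import Mathlib

open Matrix
open scoped ComplexOrder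

section Aux

variable {n : ℕ}

private lemma aux_trace_re_nonneg {M : Matrix (Fin n) (Fin n) ℂ} (hM : M.PosSemidef) :
    0 ≤ M.trace.re := by
  have h : ∀ i, 0 ≤ (M i i).re := by
    intro i
    have h1 := hM.re_dotProduct_nonneg (Pi.single i 1)
    have h2 : star (Pi.single i 1 : Fin n → ℂ) ⬝ᵥ M *ᵥ (Pi.single i 1) = M i i := by
      simp [dotProduct, Matrix.mulVec, Pi.single_apply, Finset.sum_ite_eq,
        apply_ite, mul_comm]
    rw [h2] at h1
    exact h1
  rw [Matrix.trace]
  simp only [Complex.re_sum]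
  exact Finset.sum_nonneg fun i _ => h i

private lemma aux_eq_zero_of_trace_conjTranspose_mul_self
    {M : Matrix (Fin n) (Fin n) ℂ} (h : (Mᴴ * M).trace = 0) : M = 0 := by
  have h1 : (Mᴴ * M).trace.re = ∑ j, ∑ i, Complex.normSq (M i j) := by
    simp only [Matrix.trace, Matrix.diag, Matrix.mul_apply, Matrix.conjTranspose_apply,
      Complex.re_sum, Complex.mul_re, Complex.normSq_apply]
    refine Finset.sum_congr rfl fun j _ => Finset.sum_congr rfl fun i _ => ?_
    simp [Complex.star_def]
  have h2 : ∑ j, ∑ i, Complex.normSq (M i j) = 0 := by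
    rw [← h1, h, Complex.zero_re]
  ext i j
  have h3 := (Finset.sum_eq_zero_iff_of_nonneg
    (fun j _ => Finset.sum_nonneg fun i _ => Complex.normSq_nonneg _)).mp h2 j (Finset.mem_univ _)
  have h4 := (Finset.sum_eq_zero_iff_of_nonneg
    (fun i _ => Complex.normSq_nonneg _)).mp h3 i (Finset.mem_univ _)
  simpa using Complex.normSq_eq_zero.mp h4

private lemma aux_trace_factor {A B : Matrix (Fin n) (Fin n) ℂ}
    (hA : A.PosSemidef) (hB : B.PosSemidef) :
    ∃ G : Matrix (Fin n) (Fin n) ℂ, (A * B).trace = (Gᴴ * G).trace ∧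
      (G = 0 → A * B = 0) := by
  obtain ⟨E, hE⟩ : ∃ E : Matrix (Fin n) (Fin n) ℂ, A = Eᴴ * E := by
    open scoped MatrixOrder in exact CStarAlgebra.nonneg_iff_eq_star_mul_self.mp hA.nonneg
  obtain ⟨D, hD⟩ : ∃ D : Matrix (Fin n) (Fin n) ℂ, B = Dᴴ * D := by
    open scoped MatrixOrder in exact CStarAlgebra.nonneg_iff_eq_star_mul_self.mp hB.nonneg
  refine ⟨E * Dᴴ, ?_, ?_⟩
  · have h1 : A * B = (Eᴴ * E * Dᴴ) * D := by
      rw [hE, hD]; simp only [mul_assoc]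
    have h2 : (E * Dᴴ)ᴴ * (E * Dᴴ) = D * (Eᴴ * E * Dᴴ) := by
      simp only [Matrix.conjTranspose_mul, Matrix.conjTranspose_conjTranspose, mul_assoc]
    rw [h1, h2, Matrix.trace_mul_comm]
  · intro hG
    have : A * B = Eᴴ * (E * Dᴴ) * D := by rw [hE, hD]; simp only [mul_assoc]
    rw [this, hG, mul_zero, zero_mul]

private lemma aux_trace_mul_psd_re_nonneg {A B : Matrix (Fin n) (Fin n) ℂ}
    (hA : A.PosSemidef) (hB : B.PosSemidef) : 0 ≤ (A * B).trace.re := by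
  obtain ⟨G, hG, -⟩ := aux_trace_factor hA hB
  rw [hG]
  exact aux_trace_re_nonneg (Matrix.posSemidef_conjTranspose_mul_self G)

private lemma aux_mul_eq_zero_of_trace {A B : Matrix (Fin n) (Fin n) ℂ}
    (hA : A.PosSemidef) (hB : B.PosSemidef) (h : (A * B).trace = 0) : A * B = 0 := by
  obtain ⟨G, hG, hG0⟩ := aux_trace_factor hA hB
  exact hG0 (aux_eq_zero_of_trace_conjTranspose_mul_self (by rw [← hG, h]))

private lemma aux_cfc_posSemidef {A : Matrix (Fin n) (Fin n) ℂ} (hA : A.IsHermitian)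
    (f : ℝ → ℝ) (hf : ∀ x ∈ spectrum ℝ A, 0 ≤ f x) : (cfc f A).PosSemidef := by
  rw [Matrix.IsHermitian.cfc_eq hA, Matrix.IsHermitian.cfc]
  rw [Unitary.conjStarAlgAut_apply, star_eq_conjTranspose]
  apply Matrix.PosSemidef.mul_mul_conjTranspose_same
  apply Matrix.PosSemidef.diagonal
  intro i
  simp only [Function.comp_apply, Pi.zero_apply]
  exact RCLike.ofReal_nonneg.mpr (hf _ (hA.eigenvalues_mem_spectrum_real i))

end Aux

/-- Moreau decomposition for the KMS inner product `⟨A,B⟩ = Tr(A σ^{1/2} B σ^{1/2})`: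
for a positive definite density matrix `σ` and Hermitian `X`, the positive part of `X` with
respect to the cone of PSD matrices is `σ^{-1/4} (σ^{1/4} X σ^{1/4})₍₊₎ σ^{-1/4}`, where
`Y₍₊₎ = max(·,0)(Y)` is the spectral positive part.  Equivalently, this matrix minimizes the
KMS distance `‖X − A‖` over all PSD matrices `A`. -/
theorem stmt_2 (n : ℕ) (σ X : Matrix (Fin n) (Fin n) ℂ)
    (hσ : σ.PosDef) (htr : σ.trace = 1) (hX : X.IsHermitian) :
    ∀ Q Qi S A₀ : Matrix (Fin n) (Fin n) ℂ,
      Q = cfc (fun x : ℝ => x ^ ((4:ℝ)⁻¹)) σ →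
      Qi = cfc (fun x : ℝ => x ^ (-(4:ℝ)⁻¹)) σ →
      S = cfc (fun x : ℝ => x ^ ((2:ℝ)⁻¹)) σ →
      A₀ = Qi * cfc (fun x : ℝ => max x 0) (Q * X * Q) * Qi →
      -- `A₀` is the positive part of `X` in the cone decomposition w.r.t. the KMS inner product
      (∀ Xp Xm : Matrix (Fin n) (Fin n) ℂ, Xp.PosSemidef → Xm.PosSemidef →
          X = Xp - Xm → (Xp * S * Xm * S).trace = 0 → Xp = A₀) ∧
      A₀.PosSemidef ∧
      -- `A₀` minimizes the KMS norm distance to `X` over the PSD cone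
      (∀ B : Matrix (Fin n) (Fin n) ℂ, B.PosSemidef →
          ((X - A₀) * S * (X - A₀) * S).trace.re ≤ ((X - B) * S * (X - B) * S).trace.re) := by
  intro Q Qi S A₀ hQ hQi hS hA₀
  have hσh : IsSelfAdjoint σ := hσ.1
  have hspec : ∀ x ∈ spectrum ℝ σ, 0 < x := by
    rw [hσ.1.spectrum_real_eq_range_eigenvalues]
    rintro x ⟨i, rfl⟩
    exact hσ.eigenvalues_pos i
  have hcont : ∀ (f : ℝ → ℝ) (A : Matrix (Fin n) (Fin n) ℂ),
      ContinuousOn f (spectrum ℝ A) := fun f A => Set.Finite.continuousOn Matrix.finite_real_spectrum f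
  have hmul : ∀ (f g : ℝ → ℝ) (A : Matrix (Fin n) (Fin n) ℂ),
      cfc f A * cfc g A = cfc (fun x => f x * g x) A :=
    fun f g A => (cfc_mul f g A (hcont f A) (hcont g A)).symm
  -- Q is PSD, Qi is PSD:
  have hQpsd : Q.PosSemidef := by
    rw [hQ]
    exact aux_cfc_posSemidef hσ.1 _ (fun x hx => Real.rpow_nonneg (hspec x hx).le _)
  have hQipsd : Qi.PosSemidef := by
    rw [hQi]
    exact aux_cfc_posSemidef hσ.1 _ (fun x hx => Real.rpow_nonneg (hspec x hx).le _)
  have hQherm : Qᴴ = Q := hQpsd.1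
  have hQiherm : Qiᴴ = Qi := hQipsd.1
  -- algebraic identities for Q, Qi, S
  have hQQi : Q * Qi = 1 := by
    rw [hQ, hQi, hmul, cfc_congr (g := fun _ : ℝ => 1) (fun x hx => by
      simp only
      rw [← Real.rpow_add (hspec x hx)]
      norm_num)]
    exact cfc_const_one ℝ σ hσh
  have hQiQ : Qi * Q = 1 := by
    rw [hQ, hQi, hmul, cfc_congr (g := fun _ : ℝ => 1) (fun x hx => by
      simp only
      rw [← Real.rpow_add (hspec x hx)]
      norm_num)]
    exact cfc_const_one ℝ σ hσh
  have hQQ : Q * Q = S := by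
    rw [hQ, hS, hmul, cfc_congr (g := fun x : ℝ => x ^ ((2:ℝ)⁻¹) ) (fun x hx => by
      simp only
      rw [← Real.rpow_add (hspec x hx)]
      norm_num)]
  -- setup: Y and its positive/negative parts
  set Y : Matrix (Fin n) (Fin n) ℂ := Q * X * Q with hYdef
  have hYh : Y.IsHermitian := by
    show Yᴴ = Y
    rw [hYdef]
    simp only [Matrix.conjTranspose_mul, hQherm, hX.eq, mul_assoc]
  set P : Matrix (Fin n) (Fin n) ℂ := cfc (fun x : ℝ => max x 0) Y with hPdef
  set N : Matrix (Fin n) (Fin n) ℂ := cfc (fun x : ℝ => max x 0 - x) Y with hNdef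
  have hYsa : IsSelfAdjoint Y := hYh
  have hP : P.PosSemidef := aux_cfc_posSemidef hYh _ (fun x _ => le_max_right x 0)
  have hN : N.PosSemidef := aux_cfc_posSemidef hYh _ (fun x _ => by
    simp [sub_nonneg, le_max_left])
  have hPN_eq : P - N = Y := by
    rw [hPdef, hNdef, ← cfc_sub _ _ Y (hcont _ Y) (hcont _ Y)]
    rw [cfc_congr (g := fun x : ℝ => x) (fun x _ => by ring)]
    exact cfc_id' ℝ Y hYsa
  have hPmulN : P * N = 0 := by
    rw [hPdef, hNdef, hmul, cfc_congr (g := fun _ : ℝ => 0) (fun x _ => by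
      rcases le_total x 0 with h | h
      · simp [max_eq_right h]
      · simp [max_eq_left h])]
    exact cfc_const_zero ℝ Y
  have hNmulP : N * P = 0 := by
    have := congrArg Matrix.conjTranspose hPmulN
    simpa [Matrix.conjTranspose_mul, hP.1.eq, hN.1.eq] using this
  -- A₀ and its conjugations
  have hA₀P : A₀ = Qi * P * Qi := hA₀
  have hQA₀Q : Q * A₀ * Q = P := by
    rw [hA₀P]
    calc Q * (Qi * P * Qi) * Q = (Q * Qi) * P * (Qi * Q) := by
          simp only [mul_assoc]
      _ = P := by rw [hQQi, hQiQ, one_mul, mul_one]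
  have hA₀psd : A₀.PosSemidef := by
    rw [hA₀P]
    have := hP.mul_mul_conjTranspose_same Qi
    rwa [hQiherm] at this
  -- the KMS trace identity
  have key : ∀ D : Matrix (Fin n) (Fin n) ℂ,
      (D * S * D * S).trace = ((Q * D * Q) * (Q * D * Q)).trace := by
    intro D
    have h1 : D * S * D * S = (D * Q) * (Q * D * Q) * Q := by
      rw [← hQQ]; simp only [mul_assoc]
    have h2 : Q * (D * Q) * (Q * D * Q) = (Q * D * Q) * (Q * D * Q) := by
      simp only [mul_assoc]
    rw [h1, Matrix.trace_mul_cycle (D * Q) (Q * D * Q) Q, h2]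
  refine ⟨?_, hA₀psd, ?_⟩
  · -- uniqueness of the decomposition
    intro Xp Xm hXp hXm hXdec htrace0
    set P' : Matrix (Fin n) (Fin n) ℂ := Q * Xp * Q with hP'def
    set N' : Matrix (Fin n) (Fin n) ℂ := Q * Xm * Q with hN'def
    have hP' : P'.PosSemidef := by
      have := hXp.mul_mul_conjTranspose_same Q
      rwa [hQherm] at this
    have hN' : N'.PosSemidef := by
      have := hXm.mul_mul_conjTranspose_same Q
      rwa [hQherm] at this
    have hdec : P' - N' = Y := by
      rw [hP'def, hN'def, hYdef, hXdec]
      simp only [Matrix.mul_sub, Matrix.sub_mul]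
    have htr' : (P' * N').trace = 0 := by
      have hPm : P' * N' = Q * (Xp * S * Xm) * Q := by
        rw [hP'def, hN'def, ← hQQ]; simp only [mul_assoc]
      rw [hPm, Matrix.trace_mul_cycle Q (Xp * S * Xm) Q, hQQ, Matrix.trace_mul_comm]
      exact htrace0
    have hPN'0 : P' * N' = 0 := aux_mul_eq_zero_of_trace hP' hN' htr'
    have hNP'0 : N' * P' = 0 := by
      have := congrArg Matrix.conjTranspose hPN'0
      simpa [Matrix.conjTranspose_mul, hP'.1.eq, hN'.1.eq] using this
    have hsq : (P' + N') ^ 2 = (P + N) ^ 2 := by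
      have k1 : (P' + N') * (P' + N') = Y * Y := by
        have e : (P' + N') * (P' + N')
            = (P' - N') * (P' - N') + ((P' * N' + N' * P') + (P' * N' + N' * P')) := by
          noncomm_ring
        rw [e, hPN'0, hNP'0, hdec]; simp
      have k2 : (P + N) * (P + N) = Y * Y := by
        have e : (P + N) * (P + N)
            = (P - N) * (P - N) + ((P * N + N * P) + (P * N + N * P)) := by
          noncomm_ring
        rw [e, hPmulN, hNmulP, hPN_eq]; simp
      rw [pow_two, pow_two, k1, k2]
    have hsum : P' + N' = P + N := by
      open scoped MatrixOrder in
      rw [← CFC.sqrt_sq (P' + N') (hP'.add hN').nonneg, hsq, CFC.sqrt_sq _ (hP.add hN).nonneg]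
    have h2P : (2 : ℂ) • P' = (2 : ℂ) • P := by
      have hh : (P' + N') + (P' - N') = (P + N) + (P - N) := by rw [hsum, hdec, hPN_eq]
      calc (2 : ℂ) • P' = (P' + N') + (P' - N') := by rw [two_smul]; abel
        _ = (P + N) + (P - N) := hh
        _ = (2 : ℂ) • P := by rw [two_smul]; abel
    have hP'P : P' = P := smul_right_injective _ two_ne_zero h2P
    have hback : Qi * P' * Qi = Xp := by
      rw [hP'def]
      calc Qi * (Q * Xp * Q) * Qi = (Qi * Q) * Xp * (Q * Qi) := by simp only [mul_assoc]
        _ = Xp := by rw [hQiQ, hQQi, one_mul, mul_one]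
    rw [← hback, hP'P]
    exact hA₀P.symm
  · -- minimization
    intro B hB
    have hC : (Q * B * Q).PosSemidef := by
      have := hB.mul_mul_conjTranspose_same Q
      rwa [hQherm] at this
    have hQXA : Q * (X - A₀) * Q = -N := by
      have h1 : Q * (X - A₀) * Q = Y - P := by
        simp only [Matrix.mul_sub, Matrix.sub_mul]
        rw [hQA₀Q, ← hYdef]
      rw [h1, ← hPN_eq]; abel
    have hQXB : Q * (X - B) * Q = Y - Q * B * Q := by
      simp only [Matrix.mul_sub, Matrix.sub_mul]
      rfl
    rw [key (X - A₀), key (X - B), hQXA, hQXB, neg_mul_neg]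
    have hexp : (Y - Q * B * Q) * (Y - Q * B * Q)
        = (P - Q * B * Q) * (P - Q * B * Q)
          + ((Q * B * Q) * N + (N * (Q * B * Q) + N * N)) := by
      have h1 : Y - Q * B * Q = (P - Q * B * Q) - N := by rw [← hPN_eq]; abel
      have h2 : ((P - Q * B * Q) - N) * ((P - Q * B * Q) - N)
          = (P - Q * B * Q) * (P - Q * B * Q)
            - (P * N - (Q * B * Q) * N) - (N * P - N * (Q * B * Q)) + N * N := by
        noncomm_ring
      rw [h1, h2, hPmulN, hNmulP]; abel
    rw [hexp]
    simp only [Matrix.trace_add, Complex.add_re]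
    have nn1 : 0 ≤ ((P - Q * B * Q) * (P - Q * B * Q)).trace.re := by
      have hPC : (P - Q * B * Q).IsHermitian := hP.1.sub hC.1
      have he : (P - Q * B * Q) * (P - Q * B * Q)
          = (P - Q * B * Q)ᴴ * (P - Q * B * Q) := by rw [hPC.eq]
      rw [he]
      exact aux_trace_re_nonneg (Matrix.posSemidef_conjTranspose_mul_self _)
    have nn2 : 0 ≤ ((Q * B * Q) * N).trace.re := aux_trace_mul_psd_re_nonneg hC hN
    have nn3 : 0 ≤ (N * (Q * B * Q)).trace.re := aux_trace_mul_psd_re_nonneg hN hC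
    linarith
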